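/- Every infinite abelian Fort transformation group (F,G) admits a co-decomposition into transformation groups none of which is Li–Yorke chaotic: namely the family of cyclic subgroups {⟨g⟩ : g ∈ G}, and for each g ∈ G the transformation group (F, ⟨g⟩) is not Li–Yorke chaotic. -/
import Mathlib


open Pointwise

/-- The Fort topology on `F` with particular point `b`: a set is open iff it misses `b`
or has finite complement. -/
def fortTop (F : Type*) (b : F) : TopologicalSpace F where
  IsOpen U := b ∈ U → (Uᶜ : Set F).Finite
  isOpen_univ := fun _ => by simp
  isOpen_inter := fun U V hU hV h => by
    rw [Set.compl_inter]
    exact (hU h.1).union (hV h.2)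
  isOpen_sUnion := fun S hS h => by
    obtain ⟨U, hUS, hbU⟩ := h
    exact (hS U hUS hbU).subset (Set.compl_subset_compl.2 (Set.subset_sUnion_of_mem hUS))

/-- Proximality in a transformation semigroup (via a net encoded as a nontrivial filter). -/
def ProxPair (S X : Type*) [TopologicalSpace X] [SMul S X] (x y : X) : Prop :=
  ∃ z : X, ∃ l : Filter S, l.NeBot ∧
    Filter.Tendsto (fun s => s • x) l (nhds z) ∧ Filter.Tendsto (fun s => s • y) l (nhds z)

/-- The basic entourage `α_D = ((F∖D) × (F∖D)) ∪ Δ_D` of the Fort uniformity. -/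
def fortEntourage (F : Type*) (D : Set F) : Set (F × F) :=
  (Dᶜ ×ˢ Dᶜ) ∪ {p : F × F | p.1 ∈ D ∧ p.1 = p.2}

/-- Asymptoticity modulo an ideal `I` in a Fort transformation group `(F,G)`, expressed via
the generating entourages `α_D` (finite `D ⊆ F∖{b}`) of the unique uniformity of the Fort
space `F` with particular point `b`. -/
def FortAsymMod (G F : Type*) [SMul G F] (b : F) (I : Set (Set G)) (x y : F) : Prop :=
  ∀ D : Set F, D.Finite → b ∉ D → {g : G | (g • x, g • y) ∉ fortEntourage F D} ∈ I

lemma inj_of_infinite_orbit {G F : Type*} [CommGroup G] [MulAction G F] (g : G) (x : F)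
    (hinf : ¬ (Set.range fun s : ↥(Subgroup.zpowers g) => s • x).Finite) :
    Function.Injective fun s : ↥(Subgroup.zpowers g) => s • x := by
  intro s t h
  by_contra hst
  apply hinf
  have h' : s • x = t • x := h
  have hu1 : (s * t⁻¹) ≠ 1 := by
    intro h1
    exact hst (by rwa [mul_inv_eq_one] at h1)
  have hux : ((s * t⁻¹ : ↥(Subgroup.zpowers g)) : G) • x = x := by
    have hsm : (s * t⁻¹) • x = x := by
      rw [mul_comm, mul_smul, h', inv_smul_smul]
    exact hsm
  obtain ⟨d, hd⟩ := Subgroup.mem_zpowers_iff.mp (s * t⁻¹).2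
  have hd0 : d ≠ 0 := by
    rintro rfl
    apply hu1
    have : ((s * t⁻¹ : ↥(Subgroup.zpowers g)) : G) = 1 := by rw [← hd, zpow_zero]
    exact Subtype.ext this
  have hstab : g ^ d ∈ MulAction.stabilizer G x := by
    rw [MulAction.mem_stabilizer_iff, hd]; exact hux
  have habs : g ^ |d| ∈ MulAction.stabilizer G x := by
    rcases abs_choice d with h2 | h2
    · rwa [h2]
    · rw [h2, zpow_neg]; exact inv_mem hstab
  apply Set.Finite.subset ((Set.finite_Icc (0:ℤ) (|d| - 1)).image (fun r => g ^ r • x))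
  rintro _ ⟨s', rfl⟩
  obtain ⟨n, hn⟩ := Subgroup.mem_zpowers_iff.mp s'.2
  have habs0 : (0:ℤ) < |d| := abs_pos.mpr hd0
  refine ⟨n % |d|, ⟨Int.emod_nonneg n habs0.ne', by
    have := Int.emod_lt_of_pos n habs0; omega⟩, ?_⟩
  have hq : g ^ (|d| * (n / |d|)) ∈ MulAction.stabilizer G x := by
    rw [zpow_mul]; exact zpow_mem habs _
  have hsx : s' • x = g ^ n • x := by rw [Subgroup.smul_def, hn]
  have hsplit : g ^ n = g ^ (n % |d|) * g ^ (|d| * (n / |d|)) := by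
    rw [← zpow_add]
    congr 1
    exact (Int.emod_add_mul_ediv n |d|).symm
  simp only
  rw [hsx, hsplit, mul_smul, MulAction.mem_stabilizer_iff.mp hq]

lemma eq_b_of_finite_orbit_tendsto {G F : Type*} [CommGroup G] [MulAction G F] (b : F)
    (hb : ∀ g : G, g • b = b) (g : G) {l : Filter ↥(Subgroup.zpowers g)} (hl : l.NeBot)
    (u : F) (hfin : (Set.range fun s : ↥(Subgroup.zpowers g) => s • u).Finite)
    (ht : Filter.Tendsto (fun s : ↥(Subgroup.zpowers g) => s • u) l
      (@nhds F (fortTop F b) b)) : u = b := by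
  letI : TopologicalSpace F := fortTop F b
  set R : Set F := Set.range fun s : ↥(Subgroup.zpowers g) => s • u with hR
  have hopen : IsOpen ({b} ∪ Rᶜ : Set F) := by
    intro _
    apply Set.Finite.subset hfin
    intro a ha
    simp only [Set.mem_compl_iff, Set.mem_union, Set.mem_singleton_iff, not_or,
      not_not] at ha
    exact ha.2
  have hmem : ({b} ∪ Rᶜ : Set F) ∈ nhds b := hopen.mem_nhds (Or.inl rfl)
  obtain ⟨s, hs⟩ := Filter.nonempty_of_mem (Filter.mem_map.mp (ht hmem))
  have hs' : s • u ∈ ({b} ∪ Rᶜ : Set F) := hs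
  have hsu : s • u = b := by
    rcases hs' with h1 | h1
    · exact h1
    · exact absurd ⟨s, rfl⟩ h1
  calc u = s⁻¹ • (s • u) := (inv_smul_smul s u).symm
    _ = s⁻¹ • b := by rw [hsu]
    _ = b := hb _

/-- Every infinite abelian Fort transformation group `(F,G)` is co-decomposable into
non-Li–Yorke-chaotic transformation groups: the cyclic subgroups `⟨g⟩` (g ∈ G) generate `G`,
and for each `g` the transformation group `(F, ⟨g⟩)` is not Li–Yorke chaotic (it admits no
uncountable set all of whose distinct pairs are proximal and non-asymptotic modulo the ideal
of finite subsets of `⟨g⟩`). -/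
theorem stmt19 {F G : Type*} [CommGroup G] [MulAction G F] (b : F) (hF : Infinite F)
    (hb : ∀ g : G, g • b = b)
    (hcont : ∀ g : G, @Continuous F F (fortTop F b) (fortTop F b) fun x => g • x) :
    Subgroup.closure (⋃ g : G, (Subgroup.zpowers g : Set G)) = ⊤ ∧
    ∀ g : G, ¬ ∃ D : Set F, ¬ D.Countable ∧ ∀ x ∈ D, ∀ y ∈ D, x ≠ y →
        @ProxPair ↥(Subgroup.zpowers g) F (fortTop F b) _ x y ∧
        ¬ FortAsymMod ↥(Subgroup.zpowers g) F b
            {A : Set ↥(Subgroup.zpowers g) | A.Finite} x y := by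
  letI : TopologicalSpace F := fortTop F b
  constructor
  · rw [eq_top_iff]
    intro h _
    exact Subgroup.subset_closure
      (Set.mem_iUnion.mpr ⟨h, Subgroup.mem_zpowers h⟩)
  · rintro g ⟨D, hDc, hD⟩
    have hnt : D.Nontrivial := by
      by_contra h
      exact hDc ((Set.not_nontrivial_iff.mp h).countable)
    obtain ⟨x, hx, y, hy, hxy⟩ := hnt
    obtain ⟨hprox, hasym⟩ := hD x hx y hy hxy
    obtain ⟨z, l, hl, htx, hty⟩ := hprox
    -- Step 1: z = b
    have hzb : z = b := by
      by_contra hz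
      have hopen : IsOpen ({z} : Set F) := by
        intro hbz
        exact absurd (Set.mem_singleton_iff.mp hbz).symm hz
      have h1 : (fun s : ↥(Subgroup.zpowers g) => s • x) ⁻¹' {z} ∈ l :=
        Filter.mem_map.mp (htx (hopen.mem_nhds rfl))
      have h2 : (fun s : ↥(Subgroup.zpowers g) => s • y) ⁻¹' {z} ∈ l :=
        Filter.mem_map.mp (hty (hopen.mem_nhds rfl))
      obtain ⟨s, hs1, hs2⟩ := Filter.nonempty_of_mem (Filter.inter_mem h1 h2)
      have e1 : s • x = z := hs1
      have e2 : s • y = z := hs2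
      exact hxy (smul_left_cancel s (e1.trans e2.symm))
    rw [hzb] at htx hty
    -- Step 2: the non-asymptoticity data
    rw [FortAsymMod] at hasym
    push_neg at hasym
    obtain ⟨E, hEfin, hbE, hS⟩ := hasym
    have hSinf : ¬ ({s : ↥(Subgroup.zpowers g) |
        (s • x, s • y) ∉ fortEntourage F E}).Finite := hS
    apply hSinf
    -- Step 3: each of the two preimage sets is finite
    have key : ∀ u : F, Filter.Tendsto (fun s : ↥(Subgroup.zpowers g) => s • u) l (nhds b) →
        {s : ↥(Subgroup.zpowers g) | s • u ∈ E}.Finite := by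
      intro u hu
      by_cases hfin : (Set.range fun s : ↥(Subgroup.zpowers g) => s • u).Finite
      · have hub : u = b := eq_b_of_finite_orbit_tendsto b hb g hl u hfin hu
        have : {s : ↥(Subgroup.zpowers g) | s • u ∈ E} = ∅ := by
          ext s
          simp only [Set.mem_setOf_eq, Set.mem_empty_iff_false, iff_false]
          rw [hub, Subgroup.smul_def, hb]
          exact hbE
        rw [this]
        exact Set.finite_empty
      · exact hEfin.preimage ((inj_of_infinite_orbit g u hfin).injOn)
    apply Set.Finite.subset ((key x htx).union (key y hty))
    intro s hs
    simp only [Set.mem_setOf_eq] at hs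
    by_contra hmem
    simp only [Set.mem_union, Set.mem_setOf_eq, not_or] at hmem
    exact hs (Or.inl ⟨hmem.1, hmem.2⟩)
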